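/- Let F(m) = (−s(m)/β − m²/2) − (−s(m_β)/β − m_β²/2) with β > 1, s the lattice-gas entropy, and m_β ∈ (0,1) the positive root of m = tanh(βm). Let n = −m_β + δ with δ > 0 small, and G(ω) = F(n+ω) − F(n) − F'(n)ω for ω ∈ [−1−n, 1−n]. Then the equation G(ω) = 0 has exactly three solutions 0 < ω₋ < ω₊, G(ω) < 0 exactly on (ω₋, ω₊), and there is a constant c depending only on β such that |ω₋ − 2m_β| ≤ c√δ and |ω₊ − 2m_β| ≤ c√δ for all sufficiently small δ. -/

import Mathlib

open Real

/-- Lattice-gas entropy. -/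
noncomputable def latticeEntropy (m : ℝ) : ℝ :=
  -((1 - m) / 2) * Real.log ((1 - m) / 2) - ((1 + m) / 2) * Real.log ((1 + m) / 2)

/-- The GLP double-well potential `F`, normalized so `F(±m_β) = 0`. -/
noncomputable def glpF (β mβ m : ℝ) : ℝ :=
  (-(latticeEntropy m) / β - m ^ 2 / 2) - (-(latticeEntropy mβ) / β - mβ ^ 2 / 2)

/-- The tilted potential `G(ω) = F(n+ω) − F(n) − F'(n)·ω`. -/
noncomputable def glpG (β mβ n ω : ℝ) : ℝ :=
  glpF β mβ (n + ω) - glpF β mβ n - deriv (glpF β mβ) n * ω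

/- ### Auxiliary material -/

noncomputable def glpPhi (β m : ℝ) : ℝ := (Real.log (1+m) - Real.log (1-m)) / (2*β) - m

lemma latticeEntropy_eq (m : ℝ) :
    latticeEntropy m = Real.negMulLog ((1-m)/2) + Real.negMulLog ((1+m)/2) := by
  simp [latticeEntropy, Real.negMulLog]; ring

lemma continuous_latticeEntropy : Continuous latticeEntropy := by
  simp only [funext latticeEntropy_eq]
  fun_prop

lemma continuous_glpF (β mβ : ℝ) : Continuous (glpF β mβ) := by
  unfold glpF
  exact ((continuous_latticeEntropy.neg.div_const β).sub
    ((continuous_pow 2).div_const 2)).sub continuous_const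

lemma continuous_glpG (β mβ n : ℝ) : Continuous (glpG β mβ n) := by
  unfold glpG
  have := continuous_glpF β mβ
  fun_prop

lemma latticeEntropy_even (m : ℝ) : latticeEntropy (-m) = latticeEntropy m := by
  unfold latticeEntropy; ring_nf

lemma glpF_even (β mβ m : ℝ) : glpF β mβ (-m) = glpF β mβ m := by
  unfold glpF; rw [latticeEntropy_even]; ring

lemma glpF_self (β mβ : ℝ) : glpF β mβ mβ = 0 := sub_self _

lemma glpPhi_odd (β m : ℝ) : glpPhi β (-m) = - glpPhi β m := by
  unfold glpPhi
  have h1 : (1 : ℝ) + -m = 1 - m := by ring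
  rw [h1]
  have h2 : (1 : ℝ) - -m = 1 + m := by ring
  rw [h2]; ring

lemma hasDerivAt_latticeEntropy {m : ℝ} (h1 : -1 < m) (h2 : m < 1) :
    HasDerivAt latticeEntropy ((Real.log ((1-m)/2) - Real.log ((1+m)/2))/2) m := by
  have hu : (0:ℝ) < (1 - m)/2 := by linarith
  have hv : (0:ℝ) < (1 + m)/2 := by linarith
  have du : HasDerivAt (fun m : ℝ => (1 - m)/2) (-(1/2)) m := by
    have := ((hasDerivAt_id m).const_sub 1).div_const 2
    exact this.congr_deriv (by norm_num)
  have dv : HasDerivAt (fun m : ℝ => (1 + m)/2) (1/2) m :=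
    ((hasDerivAt_id m).const_add 1).div_const 2
  have dU : HasDerivAt (fun m : ℝ => ((1 - m)/2) * Real.log ((1 - m)/2))
      ((Real.log ((1-m)/2) + 1) * (-(1/2))) m :=
    by have := (Real.hasDerivAt_mul_log hu.ne').comp m du; exact this
  have dV : HasDerivAt (fun m : ℝ => ((1 + m)/2) * Real.log ((1 + m)/2))
      ((Real.log ((1+m)/2) + 1) * (1/2)) m :=
    by have := (Real.hasDerivAt_mul_log hv.ne').comp m dv; exact this
  have := (dU.neg.sub dV)
  have hfun : latticeEntropy = fun x : ℝ =>
      -((1 - x) / 2 * Real.log ((1 - x) / 2)) - (1 + x) / 2 * Real.log ((1 + x) / 2) := by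
    funext x; unfold latticeEntropy; ring
  rw [hfun]
  exact this.congr_deriv (by ring)

lemma hasDerivAt_glpF {β : ℝ} (hβ : β ≠ 0) (mβ : ℝ) {m : ℝ} (h1 : -1 < m) (h2 : m < 1) :
    HasDerivAt (glpF β mβ) (glpPhi β m) m := by
  have ds := hasDerivAt_latticeEntropy h1 h2
  have dm : HasDerivAt (fun m : ℝ => m ^ 2 / 2) m m := by
    simpa using ((hasDerivAt_pow 2 m).div_const 2)
  have : HasDerivAt (glpF β mβ)
      (-((Real.log ((1-m)/2) - Real.log ((1+m)/2))/2) / β - m) m := by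
    unfold glpF
    exact ((ds.neg.div_const β).sub dm).sub_const _
  convert this using 1
  unfold glpPhi
  rw [show Real.log ((1-m)/2) = Real.log (1-m) - Real.log 2 by
      rw [← Real.log_div (by linarith) two_ne_zero],
    show Real.log ((1+m)/2) = Real.log (1+m) - Real.log 2 by
      rw [← Real.log_div (by linarith) two_ne_zero]]
  field_simp
  ring

lemma hasDerivAt_glpPhi {β : ℝ} (hβ : β ≠ 0) {m : ℝ} (h1 : -1 < m) (h2 : m < 1) :
    HasDerivAt (glpPhi β) (1/(β*(1-m^2)) - 1) m := by
  have d1 : HasDerivAt (fun m : ℝ => Real.log (1+m)) (1/(1+m)) m := by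
    have : HasDerivAt (fun m : ℝ => (1:ℝ)+m) 1 m := (hasDerivAt_id m).const_add 1
    exact ((Real.hasDerivAt_log (by linarith : (1:ℝ)+m ≠ 0)).comp m this).congr_deriv (by simp)
  have d2 : HasDerivAt (fun m : ℝ => Real.log (1-m)) (-(1/(1-m))) m := by
    have : HasDerivAt (fun m : ℝ => (1:ℝ)-m) (-1) m := by
      simpa using (hasDerivAt_id m).const_sub 1
    have := (Real.hasDerivAt_log (by linarith : (1:ℝ)-m ≠ 0)).comp m this
    exact this.congr_deriv (by simp)
  have : HasDerivAt (glpPhi β) ((1/(1+m) - -(1/(1-m)))/(2*β) - 1) m := by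
    unfold glpPhi
    exact ((d1.sub d2).div_const (2*β)).sub (hasDerivAt_id m)
  convert this using 1
  have hm1 : (1:ℝ)+m ≠ 0 := by linarith
  have hm2 : (1:ℝ)-m ≠ 0 := by linarith
  have hm3 : β*(1-m^2) ≠ 0 := mul_ne_zero hβ (by nlinarith)
  have hm4 : (1:ℝ)-m^2 ≠ 0 := by nlinarith
  field_simp
  ring

lemma hasDerivAt_glpG {β : ℝ} (hβ : β ≠ 0) (mβ : ℝ) {n : ℝ} (hn1 : -1 < n) (hn2 : n < 1)
    {ω : ℝ} (h1 : -1 < n + ω) (h2 : n + ω < 1) :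
    HasDerivAt (glpG β mβ n) (glpPhi β (n + ω) - glpPhi β n) ω := by
  have hF : HasDerivAt (fun ω : ℝ => glpF β mβ (n + ω)) (glpPhi β (n+ω) * 1) ω :=
    (hasDerivAt_glpF hβ mβ h1 h2).comp ω ((hasDerivAt_id ω).const_add n)
  have hd : deriv (glpF β mβ) n = glpPhi β n := (hasDerivAt_glpF hβ mβ hn1 hn2).deriv
  have h3 : HasDerivAt (glpG β mβ n)
      (glpPhi β (n+ω) * 1 - (deriv (glpF β mβ) n) * 1) ω := by
    unfold glpG
    exact (hF.sub_const _).sub ((hasDerivAt_id ω).const_mul _)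
  rw [hd] at h3
  convert h3 using 1; ring

lemma deriv2_glpG {β : ℝ} (hβ : β ≠ 0) (mβ : ℝ) {n : ℝ} (hn1 : -1 < n) (hn2 : n < 1)
    {x : ℝ} (h1 : -1 < n + x) (h2 : n + x < 1) :
    deriv^[2] (glpG β mβ n) x = 1/(β*(1-(n+x)^2)) - 1 := by
  have hev : deriv (glpG β mβ n) =ᶠ[nhds x] fun ω => glpPhi β (n+ω) - glpPhi β n := by
    have hop : IsOpen {ω : ℝ | -1 < n + ω ∧ n + ω < 1} := by
      have hset : {ω : ℝ | -1 < n + ω ∧ n + ω < 1} = Set.Ioo (-1 - n) (1 - n) := by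
        ext ω
        simp only [Set.mem_setOf_eq, Set.mem_Ioo]
        constructor <;> intro h <;> constructor <;> linarith [h.1, h.2]
      rw [hset]; exact isOpen_Ioo
    filter_upwards [hop.mem_nhds ⟨h1, h2⟩] with ω hω
    exact (hasDerivAt_glpG hβ mβ hn1 hn2 hω.1 hω.2).deriv
  show deriv (deriv (glpG β mβ n)) x = _
  rw [Filter.EventuallyEq.deriv_eq hev]
  have hcomp : HasDerivAt (fun ω : ℝ => glpPhi β (n+ω)) ((1/(β*(1-(n+x)^2)) - 1) * 1) x :=
    (hasDerivAt_glpPhi hβ h1 h2).comp x ((hasDerivAt_id x).const_add n)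
  have : HasDerivAt (fun ω => glpPhi β (n+ω) - glpPhi β n)
      (1/(β*(1-(n+x)^2)) - 1) x := by
    simpa using hcomp.sub_const (glpPhi β n)
  exact this.deriv

lemma glp_betasq {β mβ : ℝ} (hβ : 1 < β) (hmβ : 0 < mβ) (hroot : mβ = Real.tanh (β * mβ)) :
    β * (1 - mβ^2) < 1 := by
  set x := β * mβ with hx
  have hxpos : 0 < x := by positivity
  have hc : 0 < Real.cosh x := Real.cosh_pos x
  have hident : Real.cosh x ^ 2 - Real.sinh x ^ 2 = 1 := Real.cosh_sq_sub_sinh_sq x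
  have hxs : x < Real.sinh x * Real.cosh x := by
    have h2 : 2 * x < Real.sinh (2 * x) := Real.self_lt_sinh_iff.2 (by linarith)
    rw [Real.sinh_two_mul] at h2; linarith
  have hmeq : mβ * Real.cosh x = Real.sinh x := by
    rw [hroot, Real.tanh_eq_sinh_div_cosh]
    field_simp
  have hP : 0 < mβ * Real.cosh x ^ 2 := by positivity
  refine (mul_lt_mul_iff_of_pos_right hP).1 ?_
  have e1 : β * (1 - mβ^2) * (mβ * Real.cosh x ^ 2) = x * (Real.cosh x^2 - Real.sinh x^2) := by
    rw [← hmeq, hx]; ring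
  have e2 : Real.sinh x * Real.cosh x = mβ * Real.cosh x^2 := by rw [← hmeq]; ring
  rw [e1, hident, mul_one, one_mul, ← e2]
  exact hxs

lemma glp_log_root {β mβ : ℝ} (hroot : mβ = Real.tanh (β * mβ)) :
    Real.log (1 + mβ) - Real.log (1 - mβ) = 2 * (β * mβ) := by
  set x := β * mβ with hx
  have hc : 0 < Real.cosh x := Real.cosh_pos x
  have h1 : 1 + mβ = Real.exp x / Real.cosh x := by
    rw [hroot, Real.tanh_eq_sinh_div_cosh, ← Real.cosh_add_sinh]
    field_simp
  have h2 : 1 - mβ = Real.exp (-x) / Real.cosh x := by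
    rw [hroot, Real.tanh_eq_sinh_div_cosh, ← Real.cosh_sub_sinh]
    field_simp
  rw [h1, h2, Real.log_div (Real.exp_ne_zero x) hc.ne',
    Real.log_div (Real.exp_ne_zero (-x)) hc.ne', Real.log_exp, Real.log_exp]
  ring

lemma glpPhi_root {β mβ : ℝ} (hβ : β ≠ 0) (hroot : mβ = Real.tanh (β * mβ)) :
    glpPhi β mβ = 0 := by
  unfold glpPhi
  rw [glp_log_root hroot]
  field_simp
  ring

lemma abs_sq_lt_one {m : ℝ} (h1 : -1 < m) (h2 : m < 1) : m^2 < 1 := by nlinarith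

/- monotonicity wrappers -/

lemma myStrictMonoOn {f f' : ℝ → ℝ} {s : Set ℝ} (hs : Convex ℝ s) (hc : ContinuousOn f s)
    (hd : ∀ m ∈ interior s, HasDerivAt f (f' m) m) (hsign : ∀ m ∈ interior s, 0 < f' m) :
    StrictMonoOn f s :=
  strictMonoOn_of_deriv_pos hs hc (fun m hm => by rw [(hd m hm).deriv]; exact hsign m hm)

lemma myStrictAntiOn {f f' : ℝ → ℝ} {s : Set ℝ} (hs : Convex ℝ s) (hc : ContinuousOn f s)
    (hd : ∀ m ∈ interior s, HasDerivAt f (f' m) m) (hsign : ∀ m ∈ interior s, f' m < 0) :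
    StrictAntiOn f s :=
  strictAntiOn_of_deriv_neg hs hc (fun m hm => by rw [(hd m hm).deriv]; exact hsign m hm)

lemma myMonotoneOn {f f' : ℝ → ℝ} {s : Set ℝ} (hs : Convex ℝ s) (hc : ContinuousOn f s)
    (hd : ∀ m ∈ interior s, HasDerivAt f (f' m) m) (hsign : ∀ m ∈ interior s, 0 ≤ f' m) :
    MonotoneOn f s :=
  monotoneOn_of_deriv_nonneg hs hc
    (fun m hm => (hd m hm).differentiableAt.differentiableWithinAt)
    (fun m hm => by rw [(hd m hm).deriv]; exact hsign m hm)

lemma myAntitoneOn {f f' : ℝ → ℝ} {s : Set ℝ} (hs : Convex ℝ s) (hc : ContinuousOn f s)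
    (hd : ∀ m ∈ interior s, HasDerivAt f (f' m) m) (hsign : ∀ m ∈ interior s, f' m ≤ 0) :
    AntitoneOn f s :=
  antitoneOn_of_deriv_nonpos hs hc
    (fun m hm => (hd m hm).differentiableAt.differentiableWithinAt)
    (fun m hm => by rw [(hd m hm).deriv]; exact hsign m hm)

set_option maxHeartbeats 12000000 in
/-- For `n = −m_β + δ` with `δ` small, `G = 0` has exactly three solutions `0 < ω₋ < ω₊`,
`G < 0` exactly on `(ω₋, ω₊)`, and `ω₋, ω₊` are within `c√δ` of `2m_β`. -/
theorem stmt8 (β mβ : ℝ) (hβ : 1 < β) (hmβ : 0 < mβ) (hmβ1 : mβ < 1)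
    (hroot : mβ = Real.tanh (β * mβ)) :
    ∃ c : ℝ, ∃ δ₀ > 0, ∀ δ : ℝ, 0 < δ → δ < δ₀ →
      ∃ ωm ωp : ℝ, 0 < ωm ∧ ωm < ωp ∧
        {ω ∈ Set.Icc (-1 - (-mβ + δ)) (1 - (-mβ + δ)) | glpG β mβ (-mβ + δ) ω = 0}
          = {0, ωm, ωp} ∧
        (∀ ω ∈ Set.Icc (-1 - (-mβ + δ)) (1 - (-mβ + δ)),
          (glpG β mβ (-mβ + δ) ω < 0 ↔ ω ∈ Set.Ioo ωm ωp)) ∧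
        |ωm - 2 * mβ| ≤ c * Real.sqrt δ ∧ |ωp - 2 * mβ| ≤ c * Real.sqrt δ := by
  have hβ0 : (0:ℝ) < β := by linarith
  have hβne : β ≠ 0 := hβ0.ne'
  obtain ⟨a, ha_def⟩ : ∃ x : ℝ, x = Real.sqrt (1 - 1/β) := ⟨_, rfl⟩
  have hainv : (0:ℝ) < 1 - 1/β := by
    have : 1/β < 1 := by rw [div_lt_one hβ0]; exact hβ
    linarith
  have ha2 : a^2 = 1 - 1/β := by rw [ha_def]; exact Real.sq_sqrt hainv.le
  have ha0 : 0 < a := by rw [ha_def]; exact Real.sqrt_pos.2 hainv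
  have h1β : 0 < 1/β := by positivity
  have ha1 : a < 1 := by linarith [ha2, h1β, sq_nonneg (a-1)]
  have hkey : β * a^2 = β - 1 := by rw [ha2]; field_simp
  have hbsq : β * (1 - mβ^2) < 1 := glp_betasq hβ hmβ hroot
  have hamβ : a < mβ := by
    by_contra h
    push_neg at h
    have h2 : mβ^2 ≤ a^2 := by
      rw [pow_two, pow_two]; exact mul_self_le_mul_self hmβ.le h
    linarith [hkey, hbsq, mul_le_mul_of_nonneg_left h2 hβ0.le]
  have hphiroot : glpPhi β mβ = 0 := glpPhi_root hβne hroot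
  -- constants
  obtain ⟨L, hL_def⟩ : ∃ x : ℝ, x = 1/(β*(1-mβ^2)) := ⟨_, rfl⟩
  have hmβsq : 0 < β*(1-mβ^2) := mul_pos hβ0 (by linarith [abs_sq_lt_one (by linarith : -1 < mβ) hmβ1])
  have hL : 0 < L := by rw [hL_def]; positivity
  obtain ⟨ε, hε_def⟩ : ∃ x : ℝ, x = min ((mβ - a)/2) ((1-mβ)/2) := ⟨_, rfl⟩
  have hε : 0 < ε := by rw [hε_def]; exact lt_min (by linarith) (by linarith)
  have hεa : ε ≤ (mβ - a)/2 := by rw [hε_def]; exact min_le_left _ _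
  have hεb : ε ≤ (1-mβ)/2 := by rw [hε_def]; exact min_le_right _ _
  have hε1 : mβ + ε < 1 := by linarith
  have hε2 : a < mβ - ε := by linarith
  obtain ⟨κ, hκ_def⟩ : ∃ x : ℝ, x = 1/(β*(1-(mβ-ε)^2)) - 1 := ⟨_, rfl⟩
  have hmε0 : 0 < mβ - ε := by linarith
  have hmε1 : mβ - ε < 1 := by linarith
  have hsqε : a^2 < (mβ-ε)^2 := sq_lt_sq' (by linarith) hε2
  have hmεsq : β*(1-(mβ-ε)^2) < 1 := by linarith [hkey, mul_lt_mul_of_pos_left hsqε hβ0]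
  have hmεsq0 : 0 < β*(1-(mβ-ε)^2) :=
    mul_pos hβ0 (by linarith [abs_sq_lt_one (by linarith : -1 < mβ-ε) hmε1])
  have hκ : 0 < κ := by
    rw [hκ_def, sub_pos, lt_div_iff₀ hmεsq0, one_mul]
    exact hmεsq
  -- derivative sign facts for phi
  have hφcont : ∀ s : Set ℝ, s ⊆ Set.Ioo (-1:ℝ) 1 → ContinuousOn (glpPhi β) s := by
    intro s hs m hm
    exact (hasDerivAt_glpPhi hβne (hs hm).1 (hs hm).2).continuousAt.continuousWithinAt
  have hφmono_pos : StrictMonoOn (glpPhi β) (Set.Ico a 1) := by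
    apply myStrictMonoOn (convex_Ico a 1)
      (hφcont _ (fun m hm => ⟨by linarith [hm.1], hm.2⟩))
      (f' := fun m => 1/(β*(1-m^2)) - 1)
    · intro m hm
      rw [interior_Ico] at hm
      exact hasDerivAt_glpPhi hβne (by linarith [hm.1]) hm.2
    · intro m hm
      rw [interior_Ico] at hm
      have hsq : a^2 < m^2 := sq_lt_sq' (by linarith [hm.1, ha0]) hm.1
      have h1 : β*(1-m^2) < 1 := by linarith [hkey, mul_lt_mul_of_pos_left hsq hβ0]
      have h0 : 0 < β*(1-m^2) :=
        mul_pos hβ0 (by linarith [abs_sq_lt_one (by linarith [hm.1, ha0] : -1 < m) hm.2])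
      rw [sub_pos, lt_div_iff₀ h0, one_mul]; exact h1
  have hφmono_neg : StrictMonoOn (glpPhi β) (Set.Ioc (-1) (-a)) := by
    apply myStrictMonoOn (convex_Ioc (-1) (-a))
      (hφcont _ (fun m hm => ⟨hm.1, by linarith [hm.2]⟩))
      (f' := fun m => 1/(β*(1-m^2)) - 1)
    · intro m hm
      rw [interior_Ioc] at hm
      exact hasDerivAt_glpPhi hβne hm.1 (by linarith [hm.2])
    · intro m hm
      rw [interior_Ioc] at hm
      have hsq : a^2 < m^2 := by
        have h := sq_lt_sq' (by linarith [hm.2] : -(-m) < a) (by linarith [hm.2] : a < -m)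
        rwa [neg_sq] at h
      have h1 : β*(1-m^2) < 1 := by linarith [hkey, mul_lt_mul_of_pos_left hsq hβ0]
      have hm1' : m < 1 := by linarith [hm.2, ha0]
      have h0 : 0 < β*(1-m^2) := mul_pos hβ0 (by linarith [abs_sq_lt_one hm.1 hm1'])
      rw [sub_pos, lt_div_iff₀ h0, one_mul]; exact h1
  -- F monotone on the right well
  have hFcont : ∀ s : Set ℝ, ContinuousOn (glpF β mβ) s := fun s => (continuous_glpF β mβ).continuousOn
  have hFanti : StrictAntiOn (glpF β mβ) (Set.Icc a mβ) := by
    apply myStrictAntiOn (convex_Icc a mβ) (hFcont _) (f' := glpPhi β)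
    · intro m hm
      rw [interior_Icc] at hm
      exact hasDerivAt_glpF hβne mβ (by linarith [hm.1]) (by linarith [hm.2])
    · intro m hm
      rw [interior_Icc] at hm
      have := hφmono_pos ⟨hm.1.le, by linarith [hm.2]⟩ ⟨hamβ.le, hmβ1⟩ hm.2
      rw [hphiroot] at this
      exact this
  have hFmono : StrictMonoOn (glpF β mβ) (Set.Icc mβ 1) := by
    apply myStrictMonoOn (convex_Icc mβ 1) (hFcont _) (f' := glpPhi β)
    · intro m hm
      rw [interior_Icc] at hm
      exact hasDerivAt_glpF hβne mβ (by linarith [hm.1]) hm.2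
    · intro m hm
      rw [interior_Icc] at hm
      have := hφmono_pos ⟨hamβ.le, hmβ1⟩ ⟨by linarith [hm.1], hm.2⟩ hm.1
      rw [hphiroot] at this
      exact this
  obtain ⟨c₀, hc₀_def⟩ : ∃ x : ℝ, x = min (glpF β mβ (mβ-ε)) (glpF β mβ (mβ+ε)) := ⟨_, rfl⟩
  have hFmε : 0 < glpF β mβ (mβ-ε) := by
    have := hFanti ⟨hε2.le, by linarith⟩ ⟨hamβ.le, le_refl _⟩ (by linarith)
    rwa [glpF_self] at this
  have hFpε : 0 < glpF β mβ (mβ+ε) := by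
    have := hFmono ⟨le_refl _, hmβ1.le⟩ ⟨by linarith, hε1.le⟩ (by linarith)
    rwa [glpF_self] at this
  have hc₀ : 0 < c₀ := by rw [hc₀_def]; exact lt_min hFmε hFpε
  -- quadratic upper bound near mβ (on [a, mβ])
  have hqmono : MonotoneOn (fun m => L*m - glpPhi β m) (Set.Icc a mβ) := by
    apply myMonotoneOn (convex_Icc a mβ) (f' := fun m => L - (1/(β*(1-m^2)) - 1))
    · intro m hm
      exact ((continuous_const.mul continuous_id).continuousOn.sub
        (hφcont _ (fun x hx => ⟨by linarith [hx.1], by linarith [hx.2]⟩))) m hm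
    · intro m hm
      rw [interior_Icc] at hm
      exact ((hasDerivAt_id m).const_mul L).sub
        (hasDerivAt_glpPhi hβne (by linarith [hm.1]) (by linarith [hm.2])) |>.congr_deriv (by ring)
    · intro m hm
      rw [interior_Icc] at hm
      have hm2 : m^2 ≤ mβ^2 := by
        rw [pow_two, pow_two]
        exact mul_self_le_mul_self (by linarith [hm.1, ha0]) hm.2.le
      have h0 : 0 < β*(1-m^2) := mul_pos hβ0
        (by linarith [abs_sq_lt_one (by linarith [hm.1, ha0] : -1 < m) (by linarith [hm.2])])
      have : 1/(β*(1-m^2)) ≤ L := by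
        rw [hL_def]
        apply one_div_le_one_div_of_le hmβsq
        linarith [mul_le_mul_of_nonneg_left hm2 hβ0.le]
      linarith [this]
  have hq : ∀ m ∈ Set.Icc a mβ, glpPhi β mβ - glpPhi β m ≤ L*(mβ - m) := by
    intro m hm
    have := hqmono hm ⟨hamβ.le, le_refl _⟩ hm.2
    simp only at this
    linarith
  have hupper : ∀ m ∈ Set.Icc a mβ, glpF β mβ m ≤ L/2*(m-mβ)^2 := by
    intro m hm
    have hanti : AntitoneOn (fun m => L/2*(m-mβ)^2 - glpF β mβ m) (Set.Icc a mβ) := by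
      apply myAntitoneOn (convex_Icc a mβ) (f' := fun m => L*(m-mβ) - glpPhi β m)
      · exact (continuous_const.mul
          ((continuous_pow 2).comp (continuous_id.sub continuous_const))).continuousOn.sub
          (hFcont _)
      · intro x hx
        rw [interior_Icc] at hx
        have h1 : HasDerivAt (fun m : ℝ => L/2*(m-mβ)^2) (L/2*(2*(x-mβ))) x := by
          have : HasDerivAt (fun m : ℝ => (m-mβ)^2) (2*(x-mβ)^1*1) x :=
            by have := (hasDerivAt_pow 2 (x-mβ)).comp x ((hasDerivAt_id x).sub_const mβ); exact this
          simpa using this.const_mul (L/2)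
        have h2 := hasDerivAt_glpF hβne mβ (by linarith [hx.1] : -1 < x) (by linarith [hx.2])
        exact (h1.sub h2).congr_deriv (by ring)
      · intro x hx
        rw [interior_Icc] at hx
        have := hq x ⟨hx.1.le, hx.2.le⟩
        rw [hphiroot] at this
        show L*(x-mβ) - glpPhi β x ≤ 0
        linarith [this]
    have := hanti hm ⟨hamβ.le, le_refl _⟩ hm.2
    simp only [glpF_self, sub_self, sub_zero] at this
    linarith [this]
  -- quadratic lower bound near mβ (on [mβ-ε, mβ+ε])
  have hrmono : MonotoneOn (fun m => glpPhi β m - κ*m) (Set.Icc (mβ-ε) (mβ+ε)) := by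
    apply myMonotoneOn (convex_Icc _ _) (f' := fun m => (1/(β*(1-m^2)) - 1) - κ)
    · exact (hφcont _ (fun x hx => ⟨by linarith [hx.1], by linarith [hx.2]⟩)).sub
        (continuous_const.mul continuous_id).continuousOn
    · intro m hm
      rw [interior_Icc] at hm
      exact ((hasDerivAt_glpPhi hβne (by linarith [hm.1]) (by linarith [hm.2])).sub
        ((hasDerivAt_id m).const_mul κ)).congr_deriv (by ring)
    · intro m hm
      rw [interior_Icc] at hm
      have hm2 : (mβ-ε)^2 ≤ m^2 := by
        rw [pow_two, pow_two]
        exact mul_self_le_mul_self hmε0.le hm.1.le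
      have h0 : 0 < β*(1-m^2) := mul_pos hβ0
        (by linarith [abs_sq_lt_one (by linarith [hm.1, hmε0] : -1 < m) (by linarith [hm.2, hε1])])
      have : 1/(β*(1-(mβ-ε)^2)) ≤ 1/(β*(1-m^2)) := by
        apply one_div_le_one_div_of_le h0
        linarith [mul_le_mul_of_nonneg_left hm2 hβ0.le]
      rw [hκ_def]
      linarith
  have hlow : ∀ m ∈ Set.Icc (mβ-ε) (mβ+ε), κ/2*(m-mβ)^2 ≤ glpF β mβ m := by
    intro m hm
    have hd : ∀ x ∈ Set.Ioo (mβ-ε) (mβ+ε),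
        HasDerivAt (fun m => glpF β mβ m - κ/2*(m-mβ)^2) (glpPhi β x - κ*(x-mβ)) x := by
      intro x hx
      have h1 : HasDerivAt (fun m : ℝ => κ/2*(m-mβ)^2) (κ/2*(2*(x-mβ))) x := by
        have : HasDerivAt (fun m : ℝ => (m-mβ)^2) (2*(x-mβ)^1*1) x :=
          by have := (hasDerivAt_pow 2 (x-mβ)).comp x ((hasDerivAt_id x).sub_const mβ); exact this
        simpa using this.const_mul (κ/2)
      have h2 := hasDerivAt_glpF hβne mβ (by linarith [hx.1] : -1 < x) (by linarith [hx.2])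
      exact (h2.sub h1).congr_deriv (by ring)
    have hcont : ContinuousOn (fun m => glpF β mβ m - κ/2*(m-mβ)^2) (Set.Icc (mβ-ε) (mβ+ε)) :=
      (hFcont _).sub (continuous_const.mul ((continuous_pow 2).comp
        (continuous_id.sub continuous_const))).continuousOn
    have hganti : AntitoneOn (fun m => glpF β mβ m - κ/2*(m-mβ)^2) (Set.Icc (mβ-ε) mβ) := by
      apply myAntitoneOn (convex_Icc _ _) (hcont.mono (Set.Icc_subset_Icc_right (by linarith)))
        (f' := fun x => glpPhi β x - κ*(x-mβ))
      · intro x hx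
        rw [interior_Icc] at hx
        exact hd x ⟨hx.1, by linarith [hx.2]⟩
      · intro x hx
        rw [interior_Icc] at hx
        have := hrmono ⟨hx.1.le, by linarith [hx.2]⟩ ⟨by linarith, by linarith⟩ hx.2.le
        simp only at this
        rw [hphiroot] at this
        show glpPhi β x - κ*(x-mβ) ≤ 0
        linarith [this]
    have hgmono : MonotoneOn (fun m => glpF β mβ m - κ/2*(m-mβ)^2) (Set.Icc mβ (mβ+ε)) := by
      apply myMonotoneOn (convex_Icc _ _) (hcont.mono (Set.Icc_subset_Icc_left (by linarith)))
        (f' := fun x => glpPhi β x - κ*(x-mβ))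
      · intro x hx
        rw [interior_Icc] at hx
        exact hd x ⟨by linarith [hx.1], hx.2⟩
      · intro x hx
        rw [interior_Icc] at hx
        have := hrmono ⟨by linarith, by linarith⟩ ⟨by linarith [hx.1], hx.2.le⟩ hx.1.le
        simp only at this
        rw [hphiroot] at this
        show 0 ≤ glpPhi β x - κ*(x-mβ)
        linarith [this]
    rcases le_total m mβ with hcase | hcase
    · have h2 := hganti ⟨hm.1, hcase⟩ ⟨by linarith, le_refl _⟩ hcase
      simp only at h2
      rw [glpF_self] at h2
      have h3 : (mβ - mβ)^2 = 0 := by ring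
      rw [h3] at h2
      linarith [h2]
    · have h2 := hgmono ⟨le_refl _, by linarith⟩ ⟨hcase, hm.2⟩ hcase
      simp only at h2
      rw [glpF_self] at h2
      have h3 : (mβ - mβ)^2 = 0 := by ring
      rw [h3] at h2
      linarith [h2]
  -- the constants
  obtain ⟨c, hc_def⟩ : ∃ x : ℝ, x = Real.sqrt (6*L/κ) + 1 := ⟨_, rfl⟩
  obtain ⟨δ₀, hδ₀_def⟩ : ∃ x : ℝ, x = min ε (min 1 (c₀/(3*L))) := ⟨_, rfl⟩
  have hδ₀ : 0 < δ₀ := by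
    rw [hδ₀_def]
    refine lt_min hε (lt_min one_pos ?_)
    positivity
  refine ⟨c, δ₀, hδ₀, ?_⟩
  intro δ hδ hδlt
  rw [hδ₀_def] at hδlt
  have hδε : δ < ε := lt_of_lt_of_le hδlt (min_le_left _ _)
  have hδ1 : δ < 1 := lt_of_lt_of_le hδlt (le_trans (min_le_right _ _) (min_le_left _ _))
  have hδc₀ : δ < c₀/(3*L) := lt_of_lt_of_le hδlt (le_trans (min_le_right _ _) (min_le_right _ _))
  have h3L : 3*L*δ < c₀ := by
    have h := (lt_div_iff₀ (by positivity : (0:ℝ) < 3*L)).1 hδc₀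
    linarith [h]
  obtain ⟨n, hn_def⟩ : ∃ x : ℝ, x = -mβ + δ := ⟨_, rfl⟩
  rw [← hn_def]
  have hn1 : -1 < n := by rw [hn_def]; linarith
  have hn2 : n < 1 := by rw [hn_def]; linarith
  have hna : n < -a := by rw [hn_def]; linarith
  -- rewrite G
  have hGdef : ∀ ω, glpG β mβ n ω = glpF β mβ (n+ω) - glpF β mβ n - glpPhi β n * ω := by
    intro ω
    unfold glpG
    rw [(hasDerivAt_glpF hβne mβ hn1 hn2).deriv]
  have hG0 : glpG β mβ n 0 = 0 := by
    rw [hGdef]; simp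
  -- φ(n) facts
  have hneven : n = -(mβ - δ) := by rw [hn_def]; ring
  have hφn_eq : glpPhi β n = - glpPhi β (mβ - δ) := by rw [hneven, glpPhi_odd]
  have hmδIco : mβ - δ ∈ Set.Ico a 1 := ⟨by linarith, by linarith⟩
  have hφn_pos : 0 < glpPhi β n := by
    rw [hφn_eq, neg_pos]
    have := hφmono_pos hmδIco ⟨hamβ.le, hmβ1⟩ (by linarith)
    rwa [hphiroot] at this
  have hφn_le : glpPhi β n ≤ L*δ := by
    rw [hφn_eq]
    have := hq (mβ - δ) ⟨by linarith, by linarith⟩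
    rw [hphiroot] at this
    have h2 : mβ - (mβ - δ) = δ := by ring
    rw [h2] at this
    linarith
  have hFn_eq : glpF β mβ n = glpF β mβ (mβ - δ) := by rw [hneven, glpF_even]
  have hFn_le : glpF β mβ n ≤ L/2*δ^2 := by
    rw [hFn_eq]
    have := hupper (mβ - δ) ⟨by linarith, by linarith⟩
    have h2 : (mβ - δ - mβ)^2 = δ^2 := by ring
    rw [h2] at this
    exact this
  have hFn_nonneg : 0 ≤ glpF β mβ n := by
    rw [hFn_eq]
    have := hFanti (show mβ - δ ∈ Set.Icc a mβ from ⟨by linarith, by linarith⟩)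
      ⟨hamβ.le, le_refl _⟩ (by linarith)
    rw [glpF_self] at this
    linarith
  have hbound : ∀ ω : ℝ, 0 ≤ ω → ω ≤ 1 - n → glpF β mβ n + glpPhi β n * ω ≤ 3*L*δ := by
    intro ω h0 h2
    have hω2 : ω ≤ 2 := by rw [hn_def] at h2; linarith
    have h3 : glpPhi β n * ω ≤ L*δ*2 :=
      mul_le_mul hφn_le hω2 h0 (by positivity)
    have hδδ : δ^2 ≤ δ := by
      have h5 := mul_le_mul_of_nonneg_left hδ1.le hδ.le
      calc δ^2 = δ*δ := by ring
        _ ≤ δ*1 := h5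
        _ = δ := by ring
    have h4 : L/2*δ^2 ≤ L/2*δ := by
      apply mul_le_mul_of_nonneg_left hδδ
      positivity
    linarith [hFn_le, h3, h4, hL, hδ]
  -- region boundaries
  obtain ⟨ω₁, hω₁_def⟩ : ∃ x : ℝ, x = -a - n := ⟨_, rfl⟩
  obtain ⟨ω₂, hω₂_def⟩ : ∃ x : ℝ, x = a - n := ⟨_, rfl⟩
  obtain ⟨ωs, hωs_def⟩ : ∃ x : ℝ, x = 2*mβ - 2*δ := ⟨_, rfl⟩
  have hω₁pos : 0 < ω₁ := by rw [hω₁_def, hn_def]; linarith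
  have hω₁₂ : ω₁ < ω₂ := by rw [hω₁_def, hω₂_def]; linarith
  have hω₂s : ω₂ < ωs := by rw [hω₂_def, hωs_def, hn_def]; linarith
  have hsend : ωs < 1 - n := by rw [hωs_def, hn_def]; linarith
  have hω₂pos : 0 < ω₂ := by linarith
  -- G at ωs is negative
  have hGs : glpG β mβ n ωs < 0 := by
    rw [hGdef]
    have h1 : n + ωs = mβ - δ := by rw [hn_def, hωs_def]; ring
    rw [h1, ← hFn_eq]
    have : 0 < glpPhi β n * ωs := by
      apply mul_pos hφn_pos
      rw [hωs_def]; linarith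
    linarith
  -- G strictly decreasing on [-1-n, 0]
  have hGanti : StrictAntiOn (glpG β mβ n) (Set.Icc (-1-n) 0) := by
    apply myStrictAntiOn (convex_Icc _ _) (continuous_glpG β mβ n).continuousOn
      (f' := fun ω => glpPhi β (n+ω) - glpPhi β n)
    · intro ω hω
      rw [interior_Icc] at hω
      exact hasDerivAt_glpG hβne mβ hn1 hn2 (by linarith [hω.1]) (by linarith [hω.2])
    · intro ω hω
      rw [interior_Icc] at hω
      have := hφmono_neg (a := n + ω) (b := n) ⟨by linarith [hω.1], by linarith [hω.2, hna]⟩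
        ⟨hn1, hna.le⟩ (by linarith [hω.2])
      linarith [this]
  -- G strictly increasing on [0, ω₁]
  have hGmono1 : StrictMonoOn (glpG β mβ n) (Set.Icc 0 ω₁) := by
    apply myStrictMonoOn (convex_Icc _ _) (continuous_glpG β mβ n).continuousOn
      (f' := fun ω => glpPhi β (n+ω) - glpPhi β n)
    · intro ω hω
      rw [interior_Icc] at hω
      have : n + ω < -a := by rw [hω₁_def] at hω; linarith [hω.2]
      exact hasDerivAt_glpG hβne mβ hn1 hn2 (by linarith [hω.1]) (by linarith [this, ha0])
    · intro ω hω
      rw [interior_Icc] at hω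
      have hub : n + ω < -a := by rw [hω₁_def] at hω; linarith [hω.2]
      have := hφmono_neg (a := n) (b := n + ω) ⟨hn1, hna.le⟩
        ⟨by linarith [hω.1], hub.le⟩ (by linarith [hω.1])
      linarith [this]
  have hGω₁ : 0 < glpG β mβ n ω₁ := by
    have := hGmono1 ⟨le_refl _, hω₁pos.le⟩ ⟨hω₁pos.le, le_refl _⟩ hω₁pos
    rwa [hG0] at this
  -- G concave on [ω₁, ω₂]
  have hGconc : ConcaveOn ℝ (Set.Icc ω₁ ω₂) (glpG β mβ n) := by
    apply StrictConcaveOn.concaveOn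
    apply strictConcaveOn_of_deriv2_neg (convex_Icc _ _) (continuous_glpG β mβ n).continuousOn
    intro x hx
    rw [interior_Icc] at hx
    have hx1 : -a < n + x := by rw [hω₁_def] at hx; linarith [hx.1]
    have hx2 : n + x < a := by rw [hω₂_def] at hx; linarith [hx.2]
    rw [deriv2_glpG hβne mβ hn1 hn2 (x := x) (by linarith [ha1]) (by linarith [ha1])]
    have hsq : (n+x)^2 < a^2 := sq_lt_sq' hx1 hx2
    have h1 : 1 < β*(1-(n+x)^2) := by linarith [hkey, mul_lt_mul_of_pos_left hsq hβ0]
    have h0 : 0 < β*(1-(n+x)^2) := by linarith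
    have : 1/(β*(1-(n+x)^2)) < 1 := by
      rw [div_lt_one h0]; exact h1
    linarith
  -- G strictly convex on [ω₂, 1-n]
  have hGconv : StrictConvexOn ℝ (Set.Icc ω₂ (1-n)) (glpG β mβ n) := by
    apply strictConvexOn_of_deriv2_pos (convex_Icc _ _) (continuous_glpG β mβ n).continuousOn
    intro x hx
    rw [interior_Icc] at hx
    have hx1 : a < n + x := by rw [hω₂_def] at hx; linarith [hx.1]
    have hx2 : n + x < 1 := by linarith [hx.2]
    rw [deriv2_glpG hβne mβ hn1 hn2 (x := x) (by linarith [ha0]) hx2]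
    have hsq : a^2 < (n+x)^2 := sq_lt_sq' (by linarith [hx1, ha0]) hx1
    have h1 : β*(1-(n+x)^2) < 1 := by linarith [hkey, mul_lt_mul_of_pos_left hsq hβ0]
    have h0 : 0 < β*(1-(n+x)^2) := mul_pos hβ0
      (by linarith [abs_sq_lt_one (by linarith [hx1, ha0] : -1 < n+x) hx2])
    have : 1 < 1/(β*(1-(n+x)^2)) := by
      rw [lt_div_iff₀ h0, one_mul]; exact h1
    linarith
  -- positivity in buffer zones of region 3
  have hbuf1 : ∀ ω : ℝ, ω₂ ≤ ω → n + ω ≤ mβ - ε → 0 < glpG β mβ n ω := by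
    intro ω hlo hhi
    rw [hGdef]
    have hm1 : a ≤ n + ω := by rw [hω₂_def] at hlo; linarith
    have hF1 : glpF β mβ (mβ-ε) ≤ glpF β mβ (n+ω) := by
      rcases eq_or_lt_of_le hhi with h | h
      · rw [h]
      · exact (hFanti ⟨hm1, by linarith⟩ ⟨hε2.le, by linarith⟩ h).le
    have hb := hbound ω (by linarith [hω₂pos]) (by linarith [hhi, hε, hmβ1])
    have : c₀ ≤ glpF β mβ (n+ω) := by
      rw [hc₀_def]; exact le_trans (min_le_left _ _) hF1
    linarith [h3L]
  have hbuf2 : ∀ ω : ℝ, mβ + ε ≤ n + ω → ω ≤ 1 - n → 0 < glpG β mβ n ω := by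
    intro ω hlo hhi
    rw [hGdef]
    have hm1 : n + ω ≤ 1 := by linarith
    have hF1 : glpF β mβ (mβ+ε) ≤ glpF β mβ (n+ω) := by
      rcases eq_or_lt_of_le hlo with h | h
      · rw [← h]
      · exact (hFmono ⟨by linarith, hε1.le⟩ ⟨by linarith, hm1⟩ h).le
    have hωpos : 0 ≤ ω := by
      rw [hn_def] at hlo
      linarith [hδε, hmβ, hε]
    have hb := hbound ω hωpos hhi
    have : c₀ ≤ glpF β mβ (n+ω) := by
      rw [hc₀_def]; exact le_trans (min_le_right _ _) hF1
    linarith [h3L]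
  have hGω₂ : 0 < glpG β mβ n ω₂ := by
    apply hbuf1 ω₂ (le_refl _)
    rw [hω₂_def]; ring_nf; linarith [hε2]
  have hGend : 0 < glpG β mβ n (1-n) := by
    apply hbuf2 (1-n) _ (le_refl _)
    have : n + (1-n) = 1 := by ring
    rw [this]; linarith [hε1]
  -- G positive on [ω₁, ω₂] by concavity
  have hGmid : ∀ ω ∈ Set.Icc ω₁ ω₂, 0 < glpG β mβ n ω := by
    intro ω hω
    obtain ⟨t₁, t₂, ht₁, ht₂, hsum, hcomb⟩ := (Convex.mem_Icc hω₁₂.le).1 hω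
    have := hGconc.2 (Set.left_mem_Icc.2 hω₁₂.le) (Set.right_mem_Icc.2 hω₁₂.le) ht₁ ht₂ hsum
    simp only [smul_eq_mul] at this
    rw [hcomb] at this
    have h6 : 0 < t₁ * glpG β mβ n ω₁ + t₂ * glpG β mβ n ω₂ := by
      rcases lt_or_ge 0 t₁ with h | h
      · have h7 := mul_pos h hGω₁
        have h8 : 0 ≤ t₂ * glpG β mβ n ω₂ := mul_nonneg ht₂ hGω₂.le
        linarith
      · have ht₁0 : t₁ = 0 := le_antisymm h ht₁
        have ht₂1 : t₂ = 1 := by rw [ht₁0] at hsum; linarith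
        rw [ht₁0, ht₂1]
        simpa using hGω₂
    linarith [this, h6]
  -- zeros via IVT
  have hGcont : ContinuousOn (glpG β mβ n) (Set.Icc ω₂ ωs) := (continuous_glpG β mβ n).continuousOn
  obtain ⟨ωm, hωm_mem, hωm⟩ : ∃ x ∈ Set.Ioo ω₂ ωs, glpG β mβ n x = 0 := by
    have := intermediate_value_Ioo' hω₂s.le hGcont (a := ω₂) (b := ωs)
    have h0 : (0:ℝ) ∈ Set.Ioo (glpG β mβ n ωs) (glpG β mβ n ω₂) := ⟨hGs, hGω₂⟩
    obtain ⟨x, hx, hx0⟩ := this h0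
    exact ⟨x, hx, hx0⟩
  obtain ⟨ωp, hωp_mem, hωp⟩ : ∃ x ∈ Set.Ioo ωs (1-n), glpG β mβ n x = 0 := by
    have := intermediate_value_Ioo hsend.le ((continuous_glpG β mβ n).continuousOn) (a := ωs) (b := 1-n)
    have h0 : (0:ℝ) ∈ Set.Ioo (glpG β mβ n ωs) (glpG β mβ n (1-n)) := ⟨hGs, hGend⟩
    obtain ⟨x, hx, hx0⟩ := this h0
    exact ⟨x, hx, hx0⟩
  have hωm_pos : 0 < ωm := lt_trans hω₂pos hωm_mem.1
  have hωmp : ωm < ωp := lt_trans hωm_mem.2 hωp_mem.1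
  have hωm_Icc : ωm ∈ Set.Icc ω₂ (1-n) := ⟨hωm_mem.1.le, by linarith [hωm_mem.2, hsend]⟩
  have hωp_Icc : ωp ∈ Set.Icc ω₂ (1-n) := ⟨by linarith [hωp_mem.1, hω₂s], hωp_mem.2.le⟩
  have hωs_Icc : ωs ∈ Set.Icc ω₂ (1-n) := ⟨hω₂s.le, hsend.le⟩
  -- negativity between the zeros
  have hneg : ∀ ω ∈ Set.Ioo ωm ωp, glpG β mβ n ω < 0 := by
    intro ω hω
    obtain ⟨t₁, t₂, ht₁, ht₂, hsum, hcomb⟩ := (Convex.mem_Ioo hωmp).1 hω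
    have := hGconv.2 hωm_Icc hωp_Icc (ne_of_lt hωmp) ht₁ ht₂ hsum
    simp only [smul_eq_mul] at this
    rw [hcomb, hωm, hωp] at this
    simpa using this
  -- positivity in region 3 outside [ωm, ωp]
  have hpos3a : ∀ ω ∈ Set.Icc ω₂ (1-n), ω < ωm → 0 < glpG β mβ n ω := by
    intro ω hω hlt
    by_contra hle
    push_neg at hle
    have hmem : ωm ∈ Set.Ioo ω ωs := ⟨hlt, hωm_mem.2⟩
    obtain ⟨t₁, t₂, ht₁, ht₂, hsum, hcomb⟩ := (Convex.mem_Ioo (by linarith [hmem.1, hmem.2] : ω < ωs)).1 hmem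
    have := hGconv.2 hω hωs_Icc (by linarith [hmem.1, hmem.2] : ω ≠ ωs) ht₁ ht₂ hsum
    simp only [smul_eq_mul] at this
    rw [hcomb, hωm] at this
    have h7 : t₁ * glpG β mβ n ω ≤ 0 := mul_nonpos_of_nonneg_of_nonpos ht₁.le hle
    have h8 : t₂ * glpG β mβ n ωs < 0 := mul_neg_of_pos_of_neg ht₂ hGs
    linarith
  have hpos3b : ∀ ω ∈ Set.Icc ω₂ (1-n), ωp < ω → 0 < glpG β mβ n ω := by
    intro ω hω hlt
    by_contra hle
    push_neg at hle
    have hmem : ωp ∈ Set.Ioo ωs ω := ⟨hωp_mem.1, hlt⟩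
    obtain ⟨t₁, t₂, ht₁, ht₂, hsum, hcomb⟩ := (Convex.mem_Ioo (by linarith [hmem.1, hmem.2] : ωs < ω)).1 hmem
    have := hGconv.2 hωs_Icc hω (by linarith [hmem.1, hmem.2] : ωs ≠ ω) ht₁ ht₂ hsum
    simp only [smul_eq_mul] at this
    rw [hcomb, hωp] at this
    have h7 : t₁ * glpG β mβ n ωs < 0 := mul_neg_of_pos_of_neg ht₁ hGs
    have h8 : t₂ * glpG β mβ n ω ≤ 0 := mul_nonpos_of_nonneg_of_nonpos ht₂.le hle
    linarith
  -- master positivity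
  have hGpos : ∀ ω ∈ Set.Icc (-1-n) (1-n), ω ≠ 0 → (ω < ωm ∨ ωp < ω) → 0 < glpG β mβ n ω := by
    intro ω hω hne hcase
    rcases lt_trichotomy ω 0 with h0 | h0 | h0
    · have := hGanti ⟨hω.1, h0.le⟩ ⟨by linarith [hn2, hω.1], le_refl _⟩ h0
      rwa [hG0] at this
    · exact absurd h0 hne
    · rcases le_or_gt ω ω₁ with h1 | h1
      · have := hGmono1 ⟨le_refl _, h1.trans_lt' h0 |>.le⟩ ⟨h0.le, h1⟩ h0
        · rwa [hG0] at this
      · rcases le_or_gt ω ω₂ with h2 | h2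
        · exact hGmid ω ⟨h1.le, h2⟩
        · rcases hcase with h3 | h3
          · exact hpos3a ω ⟨h2.le, hω.2⟩ h3
          · exact hpos3b ω ⟨h2.le, hω.2⟩ h3
  -- location of the zeros
  have hm_loc : mβ - ε < n + ωm := by
    by_contra h
    push_neg at h
    exact absurd hωm (ne_of_gt (hbuf1 ωm hωm_mem.1.le h))
  have hp_loc : n + ωp < mβ + ε := by
    by_contra h
    push_neg at h
    exact absurd hωp (ne_of_gt (hbuf2 ωp h hωp_Icc.2))
  have hm_loc2 : n + ωm < mβ + ε := by
    have := hωm_mem.2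
    rw [hωs_def] at this
    rw [hn_def]
    linarith [hδε]
  have hp_loc2 : mβ - ε < n + ωp := by
    have := hωp_mem.1
    rw [hωs_def] at this
    rw [hn_def]
    linarith [hδε]
  -- the sqrt bound
  have hsqrt : ∀ ω : ℝ, glpG β mβ n ω = 0 → mβ - ε ≤ n + ω → n + ω ≤ mβ + ε →
      0 ≤ ω → ω ≤ 1 - n → |ω - 2*mβ| ≤ c * Real.sqrt δ := by
    intro ω hzero hlo hhi h0 h2
    have hFval : glpF β mβ (n+ω) = glpF β mβ n + glpPhi β n * ω := by
      rw [hGdef] at hzero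
      linarith [hzero]
    have hFle : glpF β mβ (n+ω) ≤ 3*L*δ := by
      rw [hFval]
      exact hbound ω h0 h2
    have hlow2 := hlow (n+ω) ⟨hlo, hhi⟩
    have hsq : (n+ω-mβ)^2 ≤ 6*L/κ*δ := by
      rw [div_mul_eq_mul_div, le_div_iff₀ hκ]
      linarith [hlow2, hFle]
    have habs : |n+ω-mβ| ≤ Real.sqrt (6*L/κ) * Real.sqrt δ := by
      rw [← Real.sqrt_sq_eq_abs, ← Real.sqrt_mul (by positivity : (0:ℝ) ≤ 6*L/κ)]
      exact Real.sqrt_le_sqrt hsq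
    have hδsqrt : δ ≤ Real.sqrt δ := by
      have h1 : Real.sqrt (δ*δ) ≤ Real.sqrt δ :=
        Real.sqrt_le_sqrt (by linarith [mul_le_mul_of_nonneg_left hδ1.le hδ.le])
      rwa [Real.sqrt_mul_self hδ.le] at h1
    have : |ω - 2*mβ| ≤ |n+ω-mβ| + δ := by
      rw [show ω - 2*mβ = (n+ω-mβ) + (-δ) by rw [hn_def]; ring]
      calc |(n+ω-mβ) + (-δ)| ≤ |n+ω-mβ| + |(-δ)| := abs_add_le _ _
        _ = |n+ω-mβ| + δ := by rw [abs_neg, abs_of_pos hδ]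
    rw [hc_def]
    calc |ω - 2*mβ| ≤ |n+ω-mβ| + δ := this
      _ ≤ Real.sqrt (6*L/κ) * Real.sqrt δ + Real.sqrt δ := by linarith [habs, hδsqrt]
      _ = (Real.sqrt (6*L/κ) + 1) * Real.sqrt δ := by ring
  -- finish
  refine ⟨ωm, ωp, hωm_pos, hωmp, ?_, ?_, ?_, ?_⟩
  · ext ω
    simp only [Set.mem_setOf_eq, Set.mem_insert_iff, Set.mem_singleton_iff, Set.mem_Icc]
    constructor
    · rintro ⟨⟨hlo, hhi⟩, hzero⟩
      by_contra hcon
      push_neg at hcon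
      obtain ⟨hne0, hnem, hnep⟩ := hcon
      rcases lt_trichotomy ω ωm with h1 | h1 | h1
      · exact absurd hzero (ne_of_gt (hGpos ω ⟨hlo, hhi⟩ hne0 (Or.inl h1)))
      · exact hnem h1
      · rcases lt_trichotomy ω ωp with h2 | h2 | h2
        · exact absurd hzero (ne_of_lt (hneg ω ⟨h1, h2⟩))
        · exact hnep h2
        · exact absurd hzero (ne_of_gt (hGpos ω ⟨hlo, hhi⟩ hne0 (Or.inr h2)))
    · rintro (rfl | rfl | rfl)
      · exact ⟨⟨by linarith [hn2], by linarith [hn1]⟩, hG0⟩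
      · exact ⟨⟨by linarith [hωm_pos, hn2], by linarith [hωm_Icc.2]⟩, hωm⟩
      · exact ⟨⟨by linarith [hωm_pos, hωmp, hn2], hωp_Icc.2⟩, hωp⟩
  · intro ω hω
    constructor
    · intro hGneg
      by_contra hcon
      rw [Set.mem_Ioo] at hcon
      push_neg at hcon
      rcases lt_trichotomy ω ωm with h1 | h1 | h1
      · rcases eq_or_ne ω 0 with rfl | hne0
        · rw [hG0] at hGneg; exact absurd hGneg (lt_irrefl 0)
        · exact absurd hGneg (not_lt_of_gt (hGpos ω hω hne0 (Or.inl h1)))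
      · rw [h1, hωm] at hGneg; exact absurd hGneg (lt_irrefl 0)
      · rcases lt_trichotomy ω ωp with h2 | h2 | h2
        · exact absurd h2 (not_lt_of_ge (hcon h1))
        · rw [h2, hωp] at hGneg; exact absurd hGneg (lt_irrefl 0)
        · rcases eq_or_ne ω 0 with rfl | hne0
          · rw [hG0] at hGneg; exact absurd hGneg (lt_irrefl 0)
          · exact absurd hGneg (not_lt_of_gt (hGpos ω hω hne0 (Or.inr h2)))
    · intro hmem
      exact hneg ω hmem
  · exact hsqrt ωm hωm hm_loc.le hm_loc2.le hωm_pos.le hωm_Icc.2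
  · exact hsqrt ωp hωp hp_loc2.le hp_loc.le (by linarith [hωm_pos, hωmp]) hωp_Icc.2
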